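/- Let G be a group, H a Hilbert space, ε > 0, and let φ: G → U(H) be a unitary ε-representation, i.e., ‖φ(xy) − φ(x)φ(y)‖ ≤ ε for all x,y ∈ G. Suppose ψ: G → B(H) is a positive definite map such that for every finite set F ⊆ G, every integer n ≥ 1, and every finite family of functions ξ_1,…,ξ_n, ζ_1,…,ζ_n: F → H, there exists y ∈ G with ∑_{i=1}^n ∑_{x∈F} ‖φ(xy) φ(y)* ξ_i(x) − ψ(x) ξ_i(x)‖² ≤ ∑_{i=1}^n ∑_{x∈F} ‖φ(xy) φ(y)* ξ_i(x) − ζ_i(x)‖². Then ‖φ(x) − ψ(x)‖ ≤ 2ε for all x ∈ G. -/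

import Mathlib

open scoped ComplexOrder

/-- A map `ψ : G → B(H)` is positive definite. -/
def PosDefMap {G : Type*} [Group G] {H : Type*} [NormedAddCommGroup H]
    [InnerProductSpace ℂ H] (ψ : G → H →L[ℂ] H) : Prop :=
  ∀ (n : ℕ) (x : Fin n → G) (ξ : Fin n → H),
    0 ≤ ∑ i, ∑ j, (inner ℂ (ψ ((x i)⁻¹ * x j) (ξ j)) (ξ i) : ℂ)

/-- If `φ : G → U(H)` is a unitary `ε`-representation and `ψ : G → B(H)` is
a positive definite map satisfying the approximation condition (5) of the paper, then
`‖φ(x) - ψ(x)‖ ≤ 2ε` for all `x`. -/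
theorem stmt_1 {G : Type*} [Group G] {H : Type*} [NormedAddCommGroup H]
    [InnerProductSpace ℂ H] [CompleteSpace H] (ε : ℝ) (hε : 0 < ε)
    (φ : G → H →L[ℂ] H) (hunit : ∀ x, φ x ∈ unitary (H →L[ℂ] H))
    (hrep : ∀ x y, ‖φ (x * y) - φ x * φ y‖ ≤ ε)
    (ψ : G → H →L[ℂ] H) (hψ : PosDefMap ψ)
    (h : ∀ (F : Finset G) (n : ℕ), 1 ≤ n → ∀ ξ ζ : Fin n → G → H, ∃ y : G,
      ∑ i, ∑ x ∈ F,
          ‖((φ (x * y)).comp (ContinuousLinearMap.adjoint (φ y))) (ξ i x) -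
            ψ x (ξ i x)‖ ^ 2 ≤
        ∑ i, ∑ x ∈ F,
          ‖((φ (x * y)).comp (ContinuousLinearMap.adjoint (φ y))) (ξ i x) - ζ i x‖ ^ 2) :
    ∀ x, ‖φ x - ψ x‖ ≤ 2 * ε := by
  intro x
  apply ContinuousLinearMap.opNorm_le_bound _ (by positivity)
  intro v
  obtain ⟨y, hy⟩ := h {x} 1 le_rfl (fun _ _ => v) (fun _ x' => φ x' v)
  simp only [Fin.sum_univ_one, Finset.sum_singleton] at hy
  set A := (φ (x * y)).comp (ContinuousLinearMap.adjoint (φ y)) with hA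
  have hy' : ‖A v - ψ x v‖ ≤ ‖A v - φ x v‖ := by
    have h1 : (0:ℝ) ≤ ‖A v - ψ x v‖ := norm_nonneg _
    have h2 : (0:ℝ) ≤ ‖A v - φ x v‖ := norm_nonneg _
    nlinarith
  -- norm bound on A - φ x
  have hstar : ContinuousLinearMap.adjoint (φ y) = star (φ y) :=
    (ContinuousLinearMap.star_eq_adjoint (φ y)).symm
  have hmul : φ y * star (φ y) = 1 := ((Unitary.mem_iff).mp (hunit y)).2
  have hfac : A - φ x = (φ (x * y) - φ x * φ y) * star (φ y) := by
    rw [sub_mul, mul_assoc, hmul, mul_one]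
    rw [hA, hstar]
    rfl
  have hsnorm : ‖star (φ y)‖ ≤ 1 := by
    rw [norm_star]
    have h1 := CStarRing.norm_star_mul_self (x := φ y)
    rw [((Unitary.mem_iff).mp (hunit y)).1] at h1
    have h2 : ‖(1 : H →L[ℂ] H)‖ ≤ 1 := ContinuousLinearMap.norm_id_le
    nlinarith [norm_nonneg (φ y)]
  have hAphi : ‖A - φ x‖ ≤ ε := by
    rw [hfac]
    calc ‖(φ (x * y) - φ x * φ y) * star (φ y)‖
        ≤ ‖φ (x * y) - φ x * φ y‖ * ‖star (φ y)‖ := norm_mul_le _ _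
      _ ≤ ε * 1 := mul_le_mul (hrep x y) hsnorm (norm_nonneg _) hε.le
      _ = ε := mul_one ε
  have hAv : ‖A v - φ x v‖ ≤ ε * ‖v‖ := by
    have := (A - φ x).le_opNorm v
    simpa using this.trans (mul_le_mul_of_nonneg_right hAphi (norm_nonneg v))
  calc ‖(φ x - ψ x) v‖ = ‖(φ x v - A v) + (A v - ψ x v)‖ := by
        rw [ContinuousLinearMap.sub_apply, sub_add_sub_cancel]
      _ ≤ ‖φ x v - A v‖ + ‖A v - ψ x v‖ := norm_add_le _ _
      _ ≤ ‖A v - φ x v‖ + ‖A v - φ x v‖ := by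
          rw [norm_sub_rev (φ x v)]; linarith
      _ ≤ ε * ‖v‖ + ε * ‖v‖ := add_le_add hAv hAv
      _ = 2 * ε * ‖v‖ := by ring
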